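/- Let a > 0. Then every point z of the upper half-plane ℍ with dist_ℍ(z, i·a) < arsinh(π/(2a)) satisfies |Re z| < π/2. Consequently, the map z ↦ exp(i·z) is injective on the open hyperbolic ball {z ∈ ℍ : dist_ℍ(z, i·a) < arsinh(π/(2a))}. -/

import Mathlib

open UpperHalfPlane Real

/-- The claim in the proof of Lemma 1: every point of the open hyperbolic ball of
center `i·a` and radius `arsinh(π/(2a))` has `|Re z| < π/2`, and consequently
`z ↦ exp(i·z)` is injective on this ball. -/
theorem injOn_exp_ball (a : ℝ) (ha : 0 < a) :
    (∀ z : UpperHalfPlane,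
      dist z (⟨Complex.I * a, by simpa using ha⟩ : UpperHalfPlane) <
        Real.arsinh (π / (2 * a)) → |z.re| < π / 2) ∧
    Set.InjOn (fun z : UpperHalfPlane => Complex.exp (Complex.I * z))
      {z : UpperHalfPlane |
        dist z (⟨Complex.I * a, by simpa using ha⟩ : UpperHalfPlane) <
          Real.arsinh (π / (2 * a))} := by
  set c : UpperHalfPlane := (⟨Complex.I * a, by simpa using ha⟩ : UpperHalfPlane) with hc
  have hcre : c.re = 0 := by simp [hc, UpperHalfPlane.re]
  have hcim : c.im = a := by simp [hc, UpperHalfPlane.im]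
  have key : ∀ z : UpperHalfPlane,
      dist z c < Real.arsinh (π / (2 * a)) → |z.re| < π / 2 := by
    intro z hz
    have hπ : 0 < π := Real.pi_pos
    have ht : 0 < π / (2 * a) := by positivity
    have harsinh : 0 ≤ Real.arsinh (π / (2 * a)) := Real.arsinh_nonneg_iff.mpr ht.le
    have hcosh : Real.cosh (dist z c) < Real.cosh (Real.arsinh (π / (2 * a))) := by
      rw [Real.cosh_lt_cosh, abs_of_nonneg dist_nonneg, abs_of_nonneg harsinh]
      exact hz
    rw [UpperHalfPlane.cosh_dist, Real.cosh_arsinh] at hcosh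
    set y := z.im with hy
    have hy0 : 0 < y := z.im_pos
    have hd2 : dist (z : ℂ) (c : ℂ) ^ 2 = z.re ^ 2 + (y - a) ^ 2 := by
      rw [Complex.dist_eq_re_im, Real.sq_sqrt (by positivity)]
      simp [hcre, hcim, UpperHalfPlane.coe_im, UpperHalfPlane.coe_re, hy]
    rw [hd2, hcim] at hcosh
    set C := Real.sqrt (1 + (π / (2 * a)) ^ 2) with hC
    have hC2 : C ^ 2 = 1 + (π / (2 * a)) ^ 2 := Real.sq_sqrt (by positivity)
    have h1 : 1 + (z.re ^ 2 + (y - a) ^ 2) / (2 * y * a) < C := hcosh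
    have h2 : z.re ^ 2 + (y - a) ^ 2 < 2 * y * a * (C - 1) := by
      have h2ya : 0 < 2 * y * a := by positivity
      calc z.re ^ 2 + (y - a) ^ 2
          = (z.re ^ 2 + (y - a) ^ 2) / (2 * y * a) * (2 * y * a) := by field_simp
        _ < (C - 1) * (2 * y * a) := by
            apply mul_lt_mul_of_pos_right _ h2ya
            linarith
        _ = 2 * y * a * (C - 1) := by ring
    have hat : a ^ 2 * (π / (2 * a)) ^ 2 = (π / 2) ^ 2 := by
      field_simp
    have hx2 : z.re ^ 2 < (π / 2) ^ 2 := by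
      nlinarith [sq_nonneg (y - a * C), sq_nonneg z.re, ha.le, hy0.le]
    exact lt_of_pow_lt_pow_left₀ 2 (by positivity) (by rwa [sq_abs])
  refine ⟨key, ?_⟩
  intro z hz w hw h
  simp only [Set.mem_setOf_eq] at hz hw
  have hzre := key z hz
  have hwre := key w hw
  rw [Complex.exp_eq_exp_iff_exists_int] at h
  obtain ⟨n, hn⟩ := h
  have hzw : (z : ℂ) = (w : ℂ) + n * (2 * π) := by
    have : Complex.I * z = Complex.I * ((w : ℂ) + n * (2 * π)) := by
      rw [hn]; ring
    exact mul_left_cancel₀ Complex.I_ne_zero this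
  have hre : z.re = w.re + n * (2 * π) := by
    have := congrArg Complex.re hzw
    simpa [UpperHalfPlane.coe_re] using this
  have hn0 : n = 0 := by
    have h1 : |z.re - w.re| < π := by
      rcases abs_lt.mp hzre with ⟨h1a, h1b⟩
      rcases abs_lt.mp hwre with ⟨h2a, h2b⟩
      rw [abs_lt]; constructor <;> linarith
    have h2 : |(n : ℝ)| * (2 * π) < π := by
      rw [hre] at h1
      calc |(n : ℝ)| * (2 * π) = |(n : ℝ) * (2 * π)| := by
            rw [abs_mul, abs_of_pos (by positivity : (0:ℝ) < 2 * π)]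
        _ < π := by simpa using h1
    by_contra hne
    have : (1 : ℝ) ≤ |(n : ℝ)| := by
      rw [← Int.cast_abs]
      exact_mod_cast Int.one_le_abs (by simpa using hne)
    nlinarith [Real.pi_pos]
  apply UpperHalfPlane.ext
  rw [hzw, hn0]; simp
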